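/- Let c₁, c₂, c₃ ∈ ℂ be nonzero and let v ∈ H₃ be the vector with v(1,0,0) = c₁, v(0,1,0) = c₂, v(0,0,1) = c₃, and all other entries 0. Then v lies in the W SLOCC class: there exist A₁, A₂, A₃ ∈ SL(2,ℂ) and λ ∈ ℂ, λ ≠ 0, such that v = λ·(A₁⊗A₂⊗A₃)w₃. -/

import Mathlib

open scoped BigOperators

/-- The three-qubit Hilbert space. -/
abbrev H3 := (Fin 2 × Fin 2 × Fin 2) → ℂ

/-- Squared Hermitian norm of a vector in `H3`. -/
noncomputable def normSq3 (v : H3) : ℝ := ∑ x : Fin 2 × Fin 2 × Fin 2, Complex.normSq (v x)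

/-- First one-qubit reduced density matrix. -/
noncomputable def rho1 (v : H3) : Matrix (Fin 2) (Fin 2) ℂ :=
  Matrix.of fun a a' => ∑ b : Fin 2, ∑ c : Fin 2, v (a, b, c) * star (v (a', b, c))

/-- Second one-qubit reduced density matrix. -/
noncomputable def rho2 (v : H3) : Matrix (Fin 2) (Fin 2) ℂ :=
  Matrix.of fun b b' => ∑ a : Fin 2, ∑ c : Fin 2, v (a, b, c) * star (v (a, b', c))

/-- Third one-qubit reduced density matrix. -/
noncomputable def rho3 (v : H3) : Matrix (Fin 2) (Fin 2) ℂ :=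
  Matrix.of fun c c' => ∑ a : Fin 2, ∑ b : Fin 2, v (a, b, c) * star (v (a, b, c'))

/-- Minimal (real) eigenvalue of a 2×2 complex matrix. -/
noncomputable def minEig (ρ : Matrix (Fin 2) (Fin 2) ℂ) : ℝ :=
  sInf {t : ℝ | (t : ℂ) ∈ spectrum ℂ ρ}

noncomputable def p1 (v : H3) : ℝ := minEig (rho1 v)
noncomputable def p2 (v : H3) : ℝ := minEig (rho2 v)
noncomputable def p3 (v : H3) : ℝ := minEig (rho3 v)

/-- The action of a triple of 2×2 matrices on `H3` by the tensor product. -/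
noncomputable def tensor3 (A1 A2 A3 : Matrix (Fin 2) (Fin 2) ℂ) (v : H3) : H3 :=
  fun x => ∑ a' : Fin 2, ∑ b' : Fin 2, ∑ c' : Fin 2,
    A1 x.1 a' * A2 x.2.1 b' * A3 x.2.2 c' * v (a', b', c')

/-- Local unitary equivalence of three-qubit states. -/
def LUequiv (v w : H3) : Prop :=
  ∃ U1 U2 U3 : Matrix (Fin 2) (Fin 2) ℂ,
    U1 ∈ Matrix.unitaryGroup (Fin 2) ℂ ∧ U2 ∈ Matrix.unitaryGroup (Fin 2) ℂ ∧
    U3 ∈ Matrix.unitaryGroup (Fin 2) ℂ ∧ w = tensor3 U1 U2 U3 v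

/-- The three-qubit W state. -/
noncomputable def wState : H3 := fun x =>
  if (x.1 = 1 ∧ x.2.1 = 0 ∧ x.2.2 = 0) ∨ (x.1 = 0 ∧ x.2.1 = 1 ∧ x.2.2 = 0) ∨
      (x.1 = 0 ∧ x.2.1 = 0 ∧ x.2.2 = 1)
  then ((1 / Real.sqrt 3 : ℝ) : ℂ) else 0

/-- The SLOCC class of the W state. -/
def WClass : Set H3 :=
  {v | ∃ (A1 A2 A3 : Matrix (Fin 2) (Fin 2) ℂ) (l : ℂ),
    A1.det = 1 ∧ A2.det = 1 ∧ A3.det = 1 ∧ l ≠ 0 ∧ v = l • tensor3 A1 A2 A3 wState}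

/-- every state `c₁|100⟩ + c₂|010⟩ + c₃|001⟩` with all `cᵢ ≠ 0` lies in
the W SLOCC class. -/
theorem generalized_W_states_lie_in_W_SLOCC_class
    (c1 c2 c3 : ℂ) (h1 : c1 ≠ 0) (h2 : c2 ≠ 0) (h3 : c3 ≠ 0) :
    (fun x : Fin 2 × Fin 2 × Fin 2 =>
      if x = ((1 : Fin 2), (0 : Fin 2), (0 : Fin 2)) then c1
      else if x = ((0 : Fin 2), (1 : Fin 2), (0 : Fin 2)) then c2
      else if x = ((0 : Fin 2), (0 : Fin 2), (1 : Fin 2)) then c3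
      else 0) ∈ WClass := by
  obtain ⟨d3, hd3sq⟩ : ∃ z : ℂ, z ^ 2 = c1 * c2 :=
    ⟨_, Complex.cpow_nat_inv_pow _ (by norm_num : (2 : ℕ) ≠ 0)⟩
  obtain ⟨d2, hd2sq⟩ : ∃ z : ℂ, z ^ 2 = c1 * c3 :=
    ⟨_, Complex.cpow_nat_inv_pow _ (by norm_num : (2 : ℕ) ≠ 0)⟩
  have hd3 : d3 ≠ 0 := by
    intro h; rw [h] at hd3sq; simp at hd3sq
    rcases hd3sq.symm with h | h
    exacts [h2 h, h1 h]
  have hd2 : d2 ≠ 0 := by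
    intro h; rw [h] at hd2sq; simp at hd2sq
    rcases hd2sq.symm with h | h
    exacts [h3 h, h1 h]
  obtain ⟨d1, hd1def⟩ : ∃ z : ℂ, z = c1 * c2 * c3 / (d2 * d3) := ⟨_, rfl⟩
  have hd1 : d1 ≠ 0 := by
    rw [hd1def]
    exact div_ne_zero (by simp [h1, h2, h3]) (mul_ne_zero hd2 hd3)
  have hk1 : d2 * d3 = c1 * d1 := by
    rw [hd1def]; field_simp; linear_combination d3 ^ 2 * hd2sq + (c1 * c3) * hd3sq
  have hk2 : d1 * d3 = c2 * d2 := by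
    rw [hd1def]; field_simp; linear_combination (-1 : ℂ) * hd2sq
  have hk3 : d1 * d2 = c3 * d3 := by
    rw [hd1def]; field_simp; linear_combination (-1 : ℂ) * hd3sq
  have hs3 : (Real.sqrt 3 : ℂ) ≠ 0 := by
    simp [Complex.ofReal_ne_zero]
  refine ⟨!![d1, 0; 0, d1⁻¹], !![d2, 0; 0, d2⁻¹], !![d3, 0; 0, d3⁻¹],
    (Real.sqrt 3 : ℂ), ?_, ?_, ?_, hs3, ?_⟩
  · simp [Matrix.det_fin_two_of, hd1]
  · simp [Matrix.det_fin_two_of, hd2]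
  · simp [Matrix.det_fin_two_of, hd3]
  · funext x
    obtain ⟨a, b, c⟩ := x
    fin_cases a <;> fin_cases b <;> fin_cases c <;>
      simp [tensor3, wState, Fin.sum_univ_two, Prod.ext_iff]
    · field_simp
      first
      | linear_combination (Real.sqrt 3 : ℂ) * hk3
      | linear_combination (-1 : ℂ) * hk3
    · field_simp
      first
      | linear_combination (Real.sqrt 3 : ℂ) * hk2
      | linear_combination (-1 : ℂ) * hk2
    · field_simp
      first
      | linear_combination (Real.sqrt 3 : ℂ) * hk1
      | linear_combination (-1 : ℂ) * hk1
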